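/- Let X : E → E be a C² vector field (ContDiff ℝ 2) and λ : ℝ such that div X (x) = 0 and curl X (x) = λ • X x for all x (X is an eigenvector of the vorticity operator). Then for every x : E, ΔX(x) = −(λ^2) • X x. (The squares of the eigenvalues of rot are eigenvalues of the Laplace operator Δ = rot ∘ rot.) -/

import Mathlib

open MeasureTheory RealInnerProductSpace

noncomputable section

abbrev E : Type := EuclideanSpace ℝ (Fin 3)

/-- The `i`-th standard basis vector of `E`. -/
def e (i : Fin 3) : E := EuclideanSpace.single i 1

/-- The curl (vorticity) of a vector field on `E`. -/
def curl (X : E → E) (x : E) : E :=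
  (WithLp.equiv 2 (Fin 3 → ℝ)).symm
    ![fderiv ℝ X x (e 1) 2 - fderiv ℝ X x (e 2) 1,
      fderiv ℝ X x (e 2) 0 - fderiv ℝ X x (e 0) 2,
      fderiv ℝ X x (e 0) 1 - fderiv ℝ X x (e 1) 0]

/-- The divergence of a vector field on `E`. -/
def div (X : E → E) (x : E) : ℝ := ∑ i, fderiv ℝ X x (e i) i

/-- The cross product on `E`. -/
def cross (a b : E) : E :=
  (WithLp.equiv 2 (Fin 3 → ℝ)).symm
    ![a 1 * b 2 - a 2 * b 1,
      a 2 * b 0 - a 0 * b 2,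
      a 0 * b 1 - a 1 * b 0]

infixl:74 " ×₃ " => cross

/-- The componentwise Laplacian of a vector field on `E`. -/
def lap (X : E → E) (x : E) : E :=
  (WithLp.equiv 2 (Fin 3 → ℝ)).symm
    (fun i => ∑ j, fderiv ℝ (fun y => fderiv ℝ X y (e j)) x (e j) i)

section Aux

variable {X : E → E} (hX : ContDiff ℝ 2 X) (x : E)

include hX

lemma aux_fderiv_diff : Differentiable ℝ (fderiv ℝ X) :=
  (hX.fderiv_right (m := 1) (by norm_num)).differentiable (by norm_num)

/-- Derivative of a component of a directional derivative. -/
lemma aux_comp (u : E) (i : Fin 3) :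
    HasFDerivAt (fun y => fderiv ℝ X y u i)
      ((EuclideanSpace.proj i : E →L[ℝ] ℝ).comp ((ContinuousLinearMap.apply ℝ E u).comp
        (fderiv ℝ (fderiv ℝ X) x))) x := by
  have h := ((EuclideanSpace.proj i : E →L[ℝ] ℝ)).hasFDerivAt.comp x
    ((ContinuousLinearMap.apply ℝ E u).hasFDerivAt.comp x ((aux_fderiv_diff hX x).hasFDerivAt))
  exact h

/-- Derivative of `lam * X y i`. -/
lemma aux_compX (lam : ℝ) (i : Fin 3) :
    HasFDerivAt (fun y => lam * X y i)
      (lam • ((EuclideanSpace.proj i : E →L[ℝ] ℝ).comp (fderiv ℝ X x))) x := by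
  have h := ((EuclideanSpace.proj i : E →L[ℝ] ℝ)).hasFDerivAt.comp x
    ((hX.differentiable (by norm_num) x).hasFDerivAt)
  exact h.const_mul lam

/-- Differentiating a relation of the form `∂ₐXᵢ − ∂_bXⱼ = lam Xₖ`. -/
lemma aux_key (lam : ℝ) (a : Fin 3) (i : Fin 3) (b : Fin 3) (j : Fin 3) (k : Fin 3)
    (hy : ∀ y, fderiv ℝ X y (e a) i - fderiv ℝ X y (e b) j = lam * X y k) (v : E) :
    fderiv ℝ (fderiv ℝ X) x v (e a) i - fderiv ℝ (fderiv ℝ X) x v (e b) j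
      = lam * fderiv ℝ X x v k := by
  have hL := (aux_comp hX x (e a) i).sub (aux_comp hX x (e b) j)
  have hR : HasFDerivAt (fun y => fderiv ℝ X y (e a) i - fderiv ℝ X y (e b) j)
      (lam • ((EuclideanSpace.proj k : E →L[ℝ] ℝ).comp (fderiv ℝ X x))) x := by
    have heq : (fun y => fderiv ℝ X y (e a) i - fderiv ℝ X y (e b) j)
        = fun y => lam * X y k := funext hy
    rw [heq]; exact aux_compX hX x lam k
  have := congrArg (fun L : E →L[ℝ] ℝ => L v) (hL.unique hR)
  simpa using this

/-- Differentiating the divergence-free condition. -/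
lemma aux_div (hdiv : ∀ y, div X y = 0) (v : E) :
    fderiv ℝ (fderiv ℝ X) x v (e 0) 0 + fderiv ℝ (fderiv ℝ X) x v (e 1) 1
      + fderiv ℝ (fderiv ℝ X) x v (e 2) 2 = 0 := by
  have hL := ((aux_comp hX x (e 0) 0).add (aux_comp hX x (e 1) 1)).add
    (aux_comp hX x (e 2) 2)
  have hR : HasFDerivAt
      (fun y => fderiv ℝ X y (e 0) 0 + fderiv ℝ X y (e 1) 1 + fderiv ℝ X y (e 2) 2)
      (0 : E →L[ℝ] ℝ) x := by
    have heq : (fun y => fderiv ℝ X y (e 0) 0 + fderiv ℝ X y (e 1) 1 + fderiv ℝ X y (e 2) 2)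
        = fun _ => (0:ℝ) := by
      funext y
      have := hdiv y
      simpa [div, Fin.sum_univ_three] using this
    rw [heq]; exact hasFDerivAt_const 0 x
  have := congrArg (fun L : E →L[ℝ] ℝ => L v) (hL.unique hR)
  simpa using this

end Aux

/-- If `X` is a divergence-free eigenvector of `curl` with eigenvalue `λ`, then
`ΔX = −λ² X` : squares of eigenvalues of `rot` are eigenvalues of `Δ = rot ∘ rot`. -/
theorem laplacian_of_curl_eigenvector (X : E → E) (lam : ℝ) (hX : ContDiff ℝ 2 X)
    (hdiv : ∀ x, div X x = 0) (hcurl : ∀ x, curl X x = lam • X x) (x : E) :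
    lap X x = -(lam^2) • X x := by
  -- pointwise curl equations
  have h0 : ∀ y, fderiv ℝ X y (e 1) 2 - fderiv ℝ X y (e 2) 1 = lam * X y 0 := by
    intro y
    have := congrArg (fun v : E => v 0) (hcurl y)
    simpa [curl] using this
  have h1 : ∀ y, fderiv ℝ X y (e 2) 0 - fderiv ℝ X y (e 0) 2 = lam * X y 1 := by
    intro y
    have := congrArg (fun v : E => v 1) (hcurl y)
    simpa [curl] using this
  have h2 : ∀ y, fderiv ℝ X y (e 0) 1 - fderiv ℝ X y (e 1) 0 = lam * X y 2 := by
    intro y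
    have := congrArg (fun v : E => v 2) (hcurl y)
    simpa [curl] using this
  have hc0 := aux_key hX x lam 1 2 2 1 0 h0
  have hc1 := aux_key hX x lam 2 0 0 2 1 h1
  have hc2 := aux_key hX x lam 0 1 1 0 2 h2
  have hdivd := aux_div hX x hdiv
  -- symmetry of the second derivative
  have hsymm : ∀ u v : E, ∀ i : Fin 3,
      fderiv ℝ (fderiv ℝ X) x u v i = fderiv ℝ (fderiv ℝ X) x v u i := by
    intro u v i
    have hs : IsSymmSndFDerivAt ℝ X x := hX.contDiffAt.isSymmSndFDerivAt (by norm_num)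
    rw [hs u v]
  -- the Laplacian in terms of the second derivative
  have hlap : ∀ i : Fin 3, lap X x i
      = fderiv ℝ (fderiv ℝ X) x (e 0) (e 0) i + fderiv ℝ (fderiv ℝ X) x (e 1) (e 1) i
        + fderiv ℝ (fderiv ℝ X) x (e 2) (e 2) i := by
    intro i
    have hj : ∀ j : Fin 3, fderiv ℝ (fun y => fderiv ℝ X y (e j)) x
        = (ContinuousLinearMap.apply ℝ E (e j)).comp (fderiv ℝ (fderiv ℝ X) x) := fun j =>
      ((ContinuousLinearMap.apply ℝ E (e j)).hasFDerivAt.comp x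
        ((aux_fderiv_diff hX x).hasFDerivAt)).fderiv
    simp [lap, Fin.sum_univ_three, hj 0, hj 1, hj 2]
  have hx0 := h0 x
  have hx1 := h1 x
  have hx2 := h2 x
  have hrhs : ∀ i : Fin 3, (-(lam^2) • X x) i = -(lam^2) * X x i := fun i => rfl
  have g0 : lap X x 0 = (-(lam^2) • X x) 0 := by
    rw [hlap 0, hrhs 0]
    linear_combination hdivd (e 0) - hc2 (e 1) + hc1 (e 2) - hsymm (e 0) (e 1) 1
      - hsymm (e 0) (e 2) 2 - lam * hx0
  have g1 : lap X x 1 = (-(lam^2) • X x) 1 := by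
    rw [hlap 1, hrhs 1]
    linear_combination hdivd (e 1) - hc0 (e 2) + hc2 (e 0) - hsymm (e 1) (e 2) 2
      - hsymm (e 1) (e 0) 0 - lam * hx1
  have g2 : lap X x 2 = (-(lam^2) • X x) 2 := by
    rw [hlap 2, hrhs 2]
    linear_combination hdivd (e 2) - hc1 (e 0) + hc0 (e 1) - hsymm (e 2) (e 0) 0
      - hsymm (e 2) (e 1) 1 - lam * hx2
  ext i
  fin_cases i
  · exact g0
  · exact g1
  · exact g2
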